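/- arXiv:1104.1064 — 3 statements merged into one kernel-verified Lean document; each statement's English description precedes it below -/
import Mathlib

section
/- Let 0 < p ≤ 1 and 0 < ι < 1. There is a constant K > 0 (depending only on p and ι) such that for all real x ≠ 0 and all real y, we have | |x+y|^p − |x|^p − p|x|^{p−1} sign(x) y · 1_{|y| ≤ |x|/2} | ≤ K |y|^{p+1−ι} / |x|^{1−ι} + |y|^p · 1_{|y| > |x|/2}. -/
open Real Set

private lemma rpow_subadd {p : ℝ} (hp0 : 0 ≤ p) (hp1 : p ≤ 1) {a b : ℝ}
    (ha : 0 ≤ a) (hb : 0 ≤ b) : (a + b) ^ p ≤ a ^ p + b ^ p := by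
  have h := NNReal.rpow_add_le_add_rpow ⟨a, ha⟩ ⟨b, hb⟩ hp0 hp1
  have := (NNReal.coe_le_coe).2 h
  exact this

private lemma abs_rpow_sub_rpow_le {p : ℝ} (hp0 : 0 ≤ p) (hp1 : p ≤ 1) (x y : ℝ) :
    |(|x + y| : ℝ) ^ p - |x| ^ p| ≤ |y| ^ p := by
  rw [abs_sub_le_iff]
  constructor
  · have h1 : |x + y| ^ p ≤ (|x| + |y|) ^ p :=
      Real.rpow_le_rpow (abs_nonneg _) (abs_add_le _ _) hp0
    have h2 := rpow_subadd hp0 hp1 (abs_nonneg x) (abs_nonneg y)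
    linarith
  · have h1 : |x| ^ p ≤ (|x + y| + |y|) ^ p := by
      apply Real.rpow_le_rpow (abs_nonneg _) _ hp0
      calc |x| = |(x + y) + (-y)| := by ring_nf
        _ ≤ |x + y| + |(-y)| := abs_add_le _ _
        _ = |x + y| + |y| := by rw [abs_neg]
    have h2 := rpow_subadd hp0 hp1 (abs_nonneg (x + y)) (abs_nonneg y)
    linarith

private lemma taylor_aux {p : ℝ} (hp0 : 0 < p) (hp1 : p ≤ 1) {x y : ℝ}
    (hx : 0 < x) (hy : |y| ≤ x / 2) :
    |(x + y) ^ p - x ^ p - p * x ^ (p - 1) * y| ≤ (x / 2) ^ (p - 2) * y ^ 2 := by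
  have hx2 : (0:ℝ) < x / 2 := by linarith
  set M : ℝ := p * (1 - p) * (x / 2) ^ (p - 2) with hM
  have hMnn : 0 ≤ M := by
    apply mul_nonneg (mul_nonneg hp0.le (by linarith)) (Real.rpow_nonneg hx2.le _)
  -- Step A : the derivative t ↦ p t^(p-1) is M-Lipschitz on [x/2, ∞)
  have stepA : ∀ t ∈ Ici (x / 2), |p * t ^ (p - 1) - p * x ^ (p - 1)| ≤ M * |t - x| := by
    intro t ht
    have key : ∀ s ∈ Ici (x / 2),
        HasDerivWithinAt (fun u : ℝ => p * u ^ (p - 1))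
          (p * ((p - 1) * s ^ (p - 1 - 1))) (Ici (x / 2)) s := by
      intro s hs
      have hs2 : x / 2 ≤ s := hs
      have hs0 : s ≠ 0 := (lt_of_lt_of_le hx2 hs2).ne'
      exact ((Real.hasDerivAt_rpow_const (Or.inl hs0)).const_mul p).hasDerivWithinAt
    have bound : ∀ s ∈ Ici (x / 2), ‖p * ((p - 1) * s ^ (p - 1 - 1))‖ ≤ M := by
      intro s hs
      have hs2 : x / 2 ≤ s := hs
      have hs0 : (0:ℝ) < s := lt_of_lt_of_le hx2 hs2
      have hpe : p - 1 - 1 = p - 2 := by ring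
      have hpow : s ^ (p - 2) ≤ (x / 2) ^ (p - 2) :=
        Real.rpow_le_rpow_of_nonpos hx2 hs2 (by linarith)
      rw [Real.norm_eq_abs, abs_mul, abs_mul, abs_of_pos hp0,
        abs_of_nonpos (by linarith : p - 1 ≤ 0), hpe,
        abs_of_nonneg (Real.rpow_nonneg hs0.le _), hM]
      have h1 : (1 - p) * s ^ (p - 2) ≤ (1 - p) * (x / 2) ^ (p - 2) :=
        mul_le_mul_of_nonneg_left hpow (by linarith)
      have h2 : -(p - 1) = 1 - p := by ring
      rw [h2, mul_assoc]
      exact mul_le_mul_of_nonneg_left h1 hp0.le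
    have hmem : x ∈ Ici (x / 2) := by simp only [mem_Ici]; linarith
    have := (convex_Ici (x / 2)).norm_image_sub_le_of_norm_hasDerivWithin_le key bound hmem ht
    simpa [Real.norm_eq_abs] using this
  -- every point of the segment is far from 0
  have habs : ∀ u : ℝ, u ∈ uIcc (0:ℝ) y → x / 2 ≤ x + u := by
    intro u hu
    rw [mem_uIcc] at hu
    have h1 : |u| ≤ |y| := by
      rcases hu with ⟨h1, h2⟩ | ⟨h1, h2⟩
      · rw [abs_of_nonneg h1]; exact h2.trans (le_abs_self y)
      · rw [abs_of_nonpos h2]; exact (neg_le_neg h1).trans (neg_le_abs y)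
    have := abs_le.1 (h1.trans hy)
    linarith [this.1]
  -- Step B : MVT for g u := (x+u)^p - x^p - p x^(p-1) u on uIcc 0 y
  set g : ℝ → ℝ := fun u => (x + u) ^ p - x ^ p - p * x ^ (p - 1) * u with hg
  have keyB : ∀ u ∈ uIcc (0:ℝ) y,
      HasDerivWithinAt g (p * (x + u) ^ (p - 1) - p * x ^ (p - 1)) (uIcc (0:ℝ) y) u := by
    intro u hu
    have hxu : x + u ≠ 0 := (lt_of_lt_of_le hx2 (habs u hu)).ne'
    have h1 : HasDerivAt (fun u : ℝ => (x + u) ^ p) (1 * p * (x + u) ^ (p - 1)) u :=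
      HasDerivAt.rpow_const ((hasDerivAt_id u).const_add x) (Or.inl hxu)
    have h2 := (h1.sub_const (x ^ p)).sub ((hasDerivAt_id u).const_mul (p * x ^ (p - 1)))
    have h2' : HasDerivAt g (p * (x + u) ^ (p - 1) - p * x ^ (p - 1)) u := by
      have h3 : (1 * p * (x + u) ^ (p - 1) - p * x ^ (p - 1) * 1)
          = p * (x + u) ^ (p - 1) - p * x ^ (p - 1) := by ring
      rw [h3] at h2
      exact h2
    exact h2'.hasDerivWithinAt
  have boundB : ∀ u ∈ uIcc (0:ℝ) y,
      ‖p * (x + u) ^ (p - 1) - p * x ^ (p - 1)‖ ≤ M * |y| := by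
    intro u hu
    have hmem : x + u ∈ Ici (x / 2) := habs u hu
    have := stepA (x + u) hmem
    rw [add_sub_cancel_left] at this
    rw [Real.norm_eq_abs]
    refine this.trans ?_
    apply mul_le_mul_of_nonneg_left _ hMnn
    rw [mem_uIcc] at hu
    rcases hu with ⟨h1, h2⟩ | ⟨h1, h2⟩
    · rw [abs_of_nonneg h1]; exact h2.trans (le_abs_self y)
    · rw [abs_of_nonpos h2]; exact (neg_le_neg h1).trans (neg_le_abs y)
  have h0 : (0:ℝ) ∈ uIcc (0:ℝ) y := left_mem_uIcc
  have hyy : y ∈ uIcc (0:ℝ) y := right_mem_uIcc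
  have hmvt := (convex_uIcc (0:ℝ) y).norm_image_sub_le_of_norm_hasDerivWithin_le
    keyB boundB h0 hyy
  have hg0 : g 0 = 0 := by simp [hg]
  rw [hg0, sub_zero, sub_zero, Real.norm_eq_abs, Real.norm_eq_abs] at hmvt
  have hp14 : p * (1 - p) ≤ 1 := by nlinarith
  have hpw : (0:ℝ) ≤ (x / 2) ^ (p - 2) := Real.rpow_nonneg hx2.le _
  have hyy2 : |y| * |y| = y ^ 2 := by rw [abs_mul_abs_self]; ring
  have hfin : M * |y| * |y| ≤ (x / 2) ^ (p - 2) * y ^ 2 := by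
    calc M * |y| * |y| = (p * (1 - p)) * ((x / 2) ^ (p - 2) * (|y| * |y|)) := by
          rw [hM]; ring
      _ = (p * (1 - p)) * ((x / 2) ^ (p - 2) * y ^ 2) := by rw [hyy2]
      _ ≤ 1 * ((x / 2) ^ (p - 2) * y ^ 2) :=
          mul_le_mul_of_nonneg_right hp14 (mul_nonneg hpw (sq_nonneg y))
      _ = (x / 2) ^ (p - 2) * y ^ 2 := one_mul _
  exact hmvt.trans hfin

theorem power_increment_taylor_bound (p ι : ℝ) (hp0 : 0 < p) (hp1 : p ≤ 1)
    (hι0 : 0 < ι) (hι1 : ι < 1) :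
    ∃ K > 0, ∀ x y : ℝ, x ≠ 0 →
      abs (|x + y| ^ p - |x| ^ p -
          p * |x| ^ (p - 1) * Real.sign x * y * (if |y| ≤ |x| / 2 then 1 else 0))
        ≤ K * |y| ^ (p + 1 - ι) / |x| ^ (1 - ι)
          + |y| ^ p * (if |x| / 2 < |y| then 1 else 0) := by
  refine ⟨4, by norm_num, ?_⟩
  have main : ∀ x y : ℝ, 0 < x →
      abs (|x + y| ^ p - |x| ^ p -
          p * |x| ^ (p - 1) * Real.sign x * y * (if |y| ≤ |x| / 2 then 1 else 0))
        ≤ 4 * |y| ^ (p + 1 - ι) / |x| ^ (1 - ι)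
          + |y| ^ p * (if |x| / 2 < |y| then 1 else 0) := by
    intro x y hx
    have hax : |x| = x := abs_of_pos hx
    have hsx : Real.sign x = 1 := Real.sign_of_pos hx
    rw [hax, hsx]
    by_cases hcase : |y| ≤ x / 2
    · rw [if_pos hcase, if_neg (not_lt.2 hcase)]
      have hxy : 0 < x + y := by
        have := abs_le.1 hcase; linarith [this.1]
      rw [abs_of_pos hxy]
      simp only [mul_one, one_mul]
      rw [mul_zero, add_zero]
      have h1 := taylor_aux hp0 hp1 hx hcase
      refine h1.trans ?_
      have key : x ^ (p - 2) * y ^ 2 ≤ |y| ^ (p + 1 - ι) * x ^ (ι - 1) := by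
        rcases eq_or_ne y 0 with rfl | hy0
        · have h0 : (0:ℝ) ^ (p + 1 - ι) = 0 :=
            Real.zero_rpow (by linarith : (0:ℝ) < p + 1 - ι).ne'
          simp [h0]
        · have hay : (0:ℝ) < |y| := abs_pos.2 hy0
          have e1 : y ^ 2 = |y| ^ ((p + 1 - ι) + (1 - p + ι)) := by
            rw [show (p + 1 - ι) + (1 - p + ι) = (2:ℝ) by ring]
            rw [show ((2:ℝ) : ℝ) = ((2:ℕ) : ℝ) by norm_num, Real.rpow_natCast]
            rw [sq_abs]
          rw [e1, Real.rpow_add hay]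
          have e2 : |y| ^ (1 - p + ι) ≤ x ^ (1 - p + ι) :=
            Real.rpow_le_rpow (abs_nonneg y) (hcase.trans (by linarith)) (by linarith)
          calc x ^ (p - 2) * (|y| ^ (p + 1 - ι) * |y| ^ (1 - p + ι))
              ≤ x ^ (p - 2) * (|y| ^ (p + 1 - ι) * x ^ (1 - p + ι)) := by
                apply mul_le_mul_of_nonneg_left _ (Real.rpow_nonneg hx.le _)
                exact mul_le_mul_of_nonneg_left e2 (Real.rpow_nonneg (abs_nonneg y) _)
            _ = |y| ^ (p + 1 - ι) * (x ^ (p - 2) * x ^ (1 - p + ι)) := by ring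
            _ = |y| ^ (p + 1 - ι) * x ^ (ι - 1) := by
                rw [← Real.rpow_add hx]; ring_nf
      have h4 : (x / 2) ^ (p - 2) ≤ 4 * x ^ (p - 2) := by
        rw [Real.div_rpow hx.le (by norm_num : (0:ℝ) ≤ 2)]
        rw [div_le_iff₀ (by positivity : (0:ℝ) < (2:ℝ) ^ (p - 2))]
        have h2p : (1:ℝ) ≤ 2 ^ (p - 2) * 4 := by
          have h22 : (2:ℝ) ^ ((2:ℕ):ℝ) = 4 := by rw [Real.rpow_natCast]; norm_num
          have h10 : (1:ℝ) = 2 ^ (0:ℝ) := (Real.rpow_zero 2).symm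
          rw [h10, ← h22, ← Real.rpow_add (by norm_num : (0:ℝ) < 2)]
          exact Real.rpow_le_rpow_of_exponent_le one_le_two (by push_cast; linarith)
        calc x ^ (p - 2) = x ^ (p - 2) * 1 := (mul_one _).symm
          _ ≤ x ^ (p - 2) * (2 ^ (p - 2) * 4) :=
              mul_le_mul_of_nonneg_left h2p (Real.rpow_nonneg hx.le _)
          _ = 4 * x ^ (p - 2) * 2 ^ (p - 2) := by ring
      have hfin : x ^ (ι - 1) = 1 / x ^ (1 - ι) := by
        rw [show ι - 1 = -(1 - ι) by ring, Real.rpow_neg hx.le, one_div]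
      calc (x / 2) ^ (p - 2) * y ^ 2 ≤ 4 * x ^ (p - 2) * y ^ 2 :=
            mul_le_mul_of_nonneg_right h4 (sq_nonneg y)
        _ = 4 * (x ^ (p - 2) * y ^ 2) := by ring
        _ ≤ 4 * (|y| ^ (p + 1 - ι) * x ^ (ι - 1)) := by linarith [key]
        _ = 4 * |y| ^ (p + 1 - ι) / x ^ (1 - ι) := by
            rw [hfin]; field_simp
    · rw [if_neg hcase, if_pos (not_le.1 hcase)]
      simp only [mul_zero, mul_one, sub_zero]
      have h1 : |(|x + y| : ℝ) ^ p - |x| ^ p| ≤ |y| ^ p := abs_rpow_sub_rpow_le hp0.le hp1 x y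
      have h2 : 0 ≤ 4 * |y| ^ (p + 1 - ι) / |x| ^ (1 - ι) := by positivity
      rw [hax] at h1 h2
      have := abs_le.1 h1
      linarith [this.1, this.2]
  intro x y hx
  rcases lt_or_gt_of_ne hx with hneg | hpos
  · have := main (-x) (-y) (by linarith)
    have e1 : |(-x) + (-y)| = |x + y| := by rw [show (-x) + (-y) = -(x + y) by ring, abs_neg]
    have e2 : |(-x)| = |x| := abs_neg x
    have e3 : |(-y)| = |y| := abs_neg y
    rw [e1, e2, e3] at this
    have e5 : p * |x| ^ (p - 1) * Real.sign (-x) * (-y) = p * |x| ^ (p - 1) * Real.sign x * y := by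
      rw [Real.sign_neg]; ring
    rw [e5] at this
    exact this
  · exact main x y hpos
end

section
/- Let X₁, X₂ be real random variables, p > 0, ε > 0 and k ∈ (0,1). Then there is a constant K depending only on k and p such that E[ |X₁+X₂|^{−p} · 1_{|X₁+X₂| ≥ ε} ] ≤ K [ ε^{−p} P(|X₂| ≥ kε) + E( |X₁|^{−p} · 1_{|X₁| > (1−k)ε} ) ]. -/
open MeasureTheory

theorem neg_moment_sum_bound (Ω : Type*) [MeasurableSpace Ω] (μ : Measure Ω)
    [IsProbabilityMeasure μ] (p k : ℝ) (hp : 0 < p) (hk : k ∈ Set.Ioo (0 : ℝ) 1) :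
    ∃ K > 0, ∀ ε : ℝ, 0 < ε → ∀ X₁ X₂ : Ω → ℝ, Measurable X₁ → Measurable X₂ →
      ∫⁻ ω in {ω | ε ≤ |X₁ ω + X₂ ω|}, ENNReal.ofReal (|X₁ ω + X₂ ω| ^ (-p)) ∂μ
        ≤ ENNReal.ofReal K *
            (ENNReal.ofReal (ε ^ (-p)) * μ {ω | k * ε ≤ |X₂ ω|}
              + ∫⁻ ω in {ω | (1 - k) * ε < |X₁ ω|},
                  ENNReal.ofReal (|X₁ ω| ^ (-p)) ∂μ) := by
  obtain ⟨hk0, hk1⟩ := hk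
  have hK0 : (0:ℝ) < (1 + k) ^ p := Real.rpow_pos_of_pos (by linarith) p
  have hK1 : (1:ℝ) ≤ (1 + k) ^ p := Real.one_le_rpow (by linarith) hp.le
  refine ⟨(1 + k) ^ p, hK0, ?_⟩
  intro ε hε X₁ X₂ hX₁ hX₂
  set A := {ω | ε ≤ |X₁ ω + X₂ ω|} with hA
  set B := {ω | k * ε ≤ |X₂ ω|} with hB
  set C := {ω | (1 - k) * ε < |X₁ ω|} with hC
  have hAm : MeasurableSet A := measurableSet_le measurable_const (hX₁.add hX₂).abs
  have hBm : MeasurableSet B := measurableSet_le measurable_const hX₂.abs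
  have hABm : MeasurableSet (A ∩ Bᶜ) := hAm.inter hBm.compl
  -- first piece
  have h1 : ∫⁻ ω in A ∩ B, ENNReal.ofReal (|X₁ ω + X₂ ω| ^ (-p)) ∂μ
      ≤ ENNReal.ofReal (ε ^ (-p)) * μ B := by
    calc ∫⁻ ω in A ∩ B, ENNReal.ofReal (|X₁ ω + X₂ ω| ^ (-p)) ∂μ
        ≤ ∫⁻ _ω in A ∩ B, ENNReal.ofReal (ε ^ (-p)) ∂μ := by
          refine setLIntegral_mono' (hAm.inter hBm) fun ω hω => ?_
          exact ENNReal.ofReal_le_ofReal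
            (Real.rpow_le_rpow_of_nonpos hε hω.1 (neg_nonpos.mpr hp.le))
      _ = ENNReal.ofReal (ε ^ (-p)) * μ (A ∩ B) := setLIntegral_const _ _
      _ ≤ ENNReal.ofReal (ε ^ (-p)) * μ B :=
          mul_le_mul_right (measure_mono Set.inter_subset_right) _
  -- second piece
  have hsub : A ∩ Bᶜ ⊆ C := by
    intro ω hω
    have hA' : ε ≤ |X₁ ω + X₂ ω| := hω.1
    have hB' : |X₂ ω| < k * ε := lt_of_not_ge hω.2
    have : |X₁ ω| ≥ |X₁ ω + X₂ ω| - |X₂ ω| := by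
      have := abs_sub_abs_le_abs_sub (X₁ ω + X₂ ω) (X₂ ω)
      simpa using this
    simp only [hC, Set.mem_setOf_eq]
    nlinarith
  have h2 : ∫⁻ ω in A ∩ Bᶜ, ENNReal.ofReal (|X₁ ω + X₂ ω| ^ (-p)) ∂μ
      ≤ ENNReal.ofReal ((1 + k) ^ p) * ∫⁻ ω in C, ENNReal.ofReal (|X₁ ω| ^ (-p)) ∂μ := by
    calc ∫⁻ ω in A ∩ Bᶜ, ENNReal.ofReal (|X₁ ω + X₂ ω| ^ (-p)) ∂μ
        ≤ ∫⁻ ω in A ∩ Bᶜ,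
            ENNReal.ofReal ((1 + k) ^ p) * ENNReal.ofReal (|X₁ ω| ^ (-p)) ∂μ := by
          refine setLIntegral_mono' hABm fun ω hω => ?_
          have hA' : ε ≤ |X₁ ω + X₂ ω| := hω.1
          have hB' : |X₂ ω| < k * ε := lt_of_not_ge hω.2
          have hspos : 0 < |X₁ ω + X₂ ω| := lt_of_lt_of_le hε hA'
          have hX1pos : 0 < |X₁ ω| := lt_trans (by nlinarith) (hsub hω)
          have hle : |X₁ ω| ≤ (1 + k) * |X₁ ω + X₂ ω| := by
            have := abs_add_le (X₁ ω + X₂ ω) (-(X₂ ω))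
            simp only [abs_neg] at this
            have h' : |X₁ ω| ≤ |X₁ ω + X₂ ω| + |X₂ ω| := by
              simpa using this
            nlinarith
          have key : ((1 + k) * |X₁ ω + X₂ ω|) ^ (-p) ≤ |X₁ ω| ^ (-p) :=
            Real.rpow_le_rpow_of_nonpos hX1pos hle (neg_nonpos.mpr hp.le)
          have hmul : ((1 + k) * |X₁ ω + X₂ ω|) ^ (-p)
              = (1 + k) ^ (-p) * |X₁ ω + X₂ ω| ^ (-p) :=
            Real.mul_rpow (by linarith) (abs_nonneg _)
          have hfin : |X₁ ω + X₂ ω| ^ (-p) ≤ (1 + k) ^ p * |X₁ ω| ^ (-p) := by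
            have h3 : (1 + k) ^ p * ((1 + k) ^ (-p) * |X₁ ω + X₂ ω| ^ (-p))
                ≤ (1 + k) ^ p * |X₁ ω| ^ (-p) := by
              rw [← hmul]
              exact mul_le_mul_of_nonneg_left key hK0.le
            have hcancel : (1 + k) ^ p * (1 + k) ^ (-p) = 1 := by
              rw [← Real.rpow_add (by linarith)]
              simp
            calc |X₁ ω + X₂ ω| ^ (-p)
                = (1 + k) ^ p * ((1 + k) ^ (-p) * |X₁ ω + X₂ ω| ^ (-p)) := by
                  rw [← mul_assoc, hcancel, one_mul]
              _ ≤ (1 + k) ^ p * |X₁ ω| ^ (-p) := h3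
          calc ENNReal.ofReal (|X₁ ω + X₂ ω| ^ (-p))
              ≤ ENNReal.ofReal ((1 + k) ^ p * |X₁ ω| ^ (-p)) :=
                ENNReal.ofReal_le_ofReal hfin
            _ = ENNReal.ofReal ((1 + k) ^ p) * ENNReal.ofReal (|X₁ ω| ^ (-p)) :=
                ENNReal.ofReal_mul hK0.le
      _ = ENNReal.ofReal ((1 + k) ^ p)
            * ∫⁻ ω in A ∩ Bᶜ, ENNReal.ofReal (|X₁ ω| ^ (-p)) ∂μ :=
          lintegral_const_mul' _ _ ENNReal.ofReal_ne_top
      _ ≤ ENNReal.ofReal ((1 + k) ^ p)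
            * ∫⁻ ω in C, ENNReal.ofReal (|X₁ ω| ^ (-p)) ∂μ :=
          mul_le_mul_right (lintegral_mono_set hsub) _
  -- combine
  have hsplit : ∫⁻ ω in A, ENNReal.ofReal (|X₁ ω + X₂ ω| ^ (-p)) ∂μ
      ≤ (∫⁻ ω in A ∩ B, ENNReal.ofReal (|X₁ ω + X₂ ω| ^ (-p)) ∂μ)
        + ∫⁻ ω in A ∩ Bᶜ, ENNReal.ofReal (|X₁ ω + X₂ ω| ^ (-p)) ∂μ := by
    have : A = (A ∩ B) ∪ (A ∩ Bᶜ) := (Set.inter_union_compl A B).symm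
    calc ∫⁻ ω in A, ENNReal.ofReal (|X₁ ω + X₂ ω| ^ (-p)) ∂μ
        = ∫⁻ ω in (A ∩ B) ∪ (A ∩ Bᶜ), ENNReal.ofReal (|X₁ ω + X₂ ω| ^ (-p)) ∂μ := by
          rw [← this]
      _ ≤ _ := lintegral_union_le _ _ _
  have hKge : (1:ENNReal) ≤ ENNReal.ofReal ((1 + k) ^ p) :=
    ENNReal.one_le_ofReal.mpr hK1
  calc ∫⁻ ω in A, ENNReal.ofReal (|X₁ ω + X₂ ω| ^ (-p)) ∂μ
      ≤ (∫⁻ ω in A ∩ B, ENNReal.ofReal (|X₁ ω + X₂ ω| ^ (-p)) ∂μ)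
        + ∫⁻ ω in A ∩ Bᶜ, ENNReal.ofReal (|X₁ ω + X₂ ω| ^ (-p)) ∂μ := hsplit
    _ ≤ ENNReal.ofReal (ε ^ (-p)) * μ B
        + ENNReal.ofReal ((1 + k) ^ p) * ∫⁻ ω in C, ENNReal.ofReal (|X₁ ω| ^ (-p)) ∂μ :=
        add_le_add h1 h2
    _ ≤ ENNReal.ofReal ((1 + k) ^ p) * (ENNReal.ofReal (ε ^ (-p)) * μ B)
        + ENNReal.ofReal ((1 + k) ^ p) * ∫⁻ ω in C, ENNReal.ofReal (|X₁ ω| ^ (-p)) ∂μ := by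
        exact add_le_add (le_mul_of_one_le_left (zero_le) hKge) le_rfl
    _ = ENNReal.ofReal ((1 + k) ^ p)
        * (ENNReal.ofReal (ε ^ (-p)) * μ B
          + ∫⁻ ω in C, ENNReal.ofReal (|X₁ ω| ^ (-p)) ∂μ) := by
        rw [mul_add]
end

section
/- Let W be a standard Brownian motion, and define σ̄_s = σ₀ + σ̃₀ W_s for s ∈ [0, Δ], where σ₀ ≠ 0 and σ̃₀ are constants. Then for all p₀, p₁ > 0 there is a constant K (depending on σ₀, σ̃₀, p₀, p₁) such that E[ ( ∫₀^Δ |σ̄_s|^{p₀} ds )^{−p₁} ] ≤ K Δ^{−p₁} for all Δ > 0 small enough. -/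
open MeasureTheory ProbabilityTheory

open Real
open scoped NNReal ENNReal

lemma integrable_pow_gaussian (k : ℕ) (v : ℝ≥0) :
    Integrable (fun x : ℝ => x ^ k) (gaussianReal 0 v) := by
  rcases eq_or_ne v 0 with hv | hv
  · rw [hv, gaussianReal_zero_var]
    exact (integrable_const _).congr (MeasureTheory.ae_eq_dirac fun x : ℝ => x ^ k).symm
  · rw [gaussianReal_of_var_ne_zero _ hv]
    rw [integrable_withDensity_iff (measurable_gaussianPDF _ _)
      (Filter.Eventually.of_forall fun x => ENNReal.ofReal_lt_top)]
    have hb : (0:ℝ) < (2 * v)⁻¹ := by positivity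
    have h := (integrable_rpow_mul_exp_neg_mul_sq hb
      (s := (k:ℝ)) (lt_of_lt_of_le (by norm_num) (Nat.cast_nonneg k))).const_mul ((Real.sqrt (2 * Real.pi * v))⁻¹)
    apply h.congr
    filter_upwards with x
    rw [ProbabilityTheory.gaussianPDF_def, ENNReal.toReal_ofReal (gaussianPDFReal_nonneg _ _ _)]
    rw [ProbabilityTheory.gaussianPDFReal_def]
    rw [Real.rpow_natCast]
    push_cast
    ring_nf

lemma pow_moment_gaussian (m : ℕ) (v : ℝ≥0) :
    ∫ x, x ^ (2*m) ∂(gaussianReal 0 v) = (v:ℝ)^m * ∫ x, x ^ (2*m) ∂(gaussianReal 0 1) := by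
  have hmap : (gaussianReal 0 1).map (fun x => Real.sqrt v * x) = gaussianReal 0 v := by
    have := gaussianReal_map_const_mul (μ := 0) (v := 1) (Real.sqrt v)
    simp only [mul_zero] at this
    convert this using 2
    ext
    simp [Real.sq_sqrt v.coe_nonneg]
  rw [← hmap, integral_map (by fun_prop) (by fun_prop)]
  have : ∀ x : ℝ, (Real.sqrt v * x) ^ (2*m) = (v:ℝ)^m * x ^ (2*m) := by
    intro x
    rw [mul_pow, pow_mul, Real.sq_sqrt v.coe_nonneg, pow_mul]
  simp_rw [this]
  rw [integral_const_mul]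

lemma gaussian_tail (m : ℕ) (v : ℝ≥0) (r : ℝ) (hr : 0 < r) :
    (gaussianReal 0 v) {x | r < |x|}
      ≤ ENNReal.ofReal ((∫ x, x ^ (2*m) ∂(gaussianReal 0 1)) * (v:ℝ)^m / r^(2*m)) := by
  set P := gaussianReal 0 v
  have hsub : {x : ℝ | r < |x|} ⊆ {x : ℝ | r^(2*m) ≤ x^(2*m)} := by
    intro x hx
    simp only [Set.mem_setOf_eq] at hx ⊢
    calc r^(2*m) ≤ |x|^(2*m) := pow_le_pow_left₀ hr.le hx.le _
    _ = x^(2*m) := by rw [pow_mul, sq_abs, ← pow_mul]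
  have hmark := mul_meas_ge_le_integral_of_nonneg
    (f := fun x : ℝ => x ^ (2*m)) (μ := P)
    (Filter.Eventually.of_forall fun x => (even_two_mul m).pow_nonneg x)
    (integrable_pow_gaussian _ _) (r^(2*m))
  rw [pow_moment_gaussian] at hmark
  have h1 : P {x | r < |x|} ≤ P {x | r^(2*m) ≤ x^(2*m)} := measure_mono hsub
  have hfin : P {x | r^(2*m) ≤ x^(2*m)} ≠ ⊤ := measure_ne_top _ _
  have h2 : (P {x | r^(2*m) ≤ x^(2*m)}).toReal
      ≤ (∫ x, x ^ (2*m) ∂(gaussianReal 0 1)) * (v:ℝ)^m / r^(2*m) := by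
    rw [le_div_iff₀ (by positivity)]
    calc (P {x | r^(2*m) ≤ x^(2*m)}).toReal * r^(2*m)
        = r^(2*m) * (P {x | r^(2*m) ≤ x^(2*m)}).toReal := by ring
      _ ≤ _ := hmark
      _ = _ := mul_comm _ _
  calc P {x | r < |x|} ≤ P {x | r^(2*m) ≤ x^(2*m)} := h1
    _ = ENNReal.ofReal ((P {x | r^(2*m) ≤ x^(2*m)}).toReal) := (ENNReal.ofReal_toReal hfin).symm
    _ ≤ _ := ENNReal.ofReal_le_ofReal h2

/-- A standard one-dimensional Brownian motion started at 0. -/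
structure IsBrownianMotion {Ω : Type*} [MeasurableSpace Ω] (μ : Measure Ω)
    (W : ℝ → Ω → ℝ) : Prop where
  meas : ∀ t, Measurable (W t)
  start : ∀ ω, W 0 ω = 0
  cont : ∀ ω, Continuous fun t => W t ω
  incr : ∀ s t : ℝ, 0 ≤ s → s ≤ t →
    Measure.map (fun ω => W t ω - W s ω) μ = gaussianReal 0 (Real.toNNReal (t - s))
  indep : ∀ (n : ℕ) (t : Fin (n + 1) → ℝ), Monotone t → (∀ i, 0 ≤ t i) →
    iIndepFun
      (fun i : Fin n => fun ω => W (t i.succ) ω - W (t i.castSucc) ω) μ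

section BM

variable {Ω : Type*} [MeasurableSpace Ω] {μ : Measure Ω} [IsProbabilityMeasure μ]
  {W : ℝ → Ω → ℝ} (hW : IsBrownianMotion μ W)

include hW

lemma incr_tail {u t : ℝ} (hu : 0 ≤ u) (hut : u ≤ t) (m : ℕ) (r : ℝ) (hr : 0 < r) :
    μ {ω | r < |W t ω - W u ω|}
      ≤ ENNReal.ofReal ((∫ x, x ^ (2*m) ∂(gaussianReal 0 1)) * (t-u)^m / r^(2*m)) := by
  have hmeas : Measurable fun ω => W t ω - W u ω := (hW.meas t).sub (hW.meas u)
  have hset : MeasurableSet {x : ℝ | r < |x|} :=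
    measurableSet_lt measurable_const measurable_abs
  have : {ω | r < |W t ω - W u ω|} = (fun ω => W t ω - W u ω) ⁻¹' {x | r < |x|} := rfl
  rw [this, ← Measure.map_apply hmeas hset, hW.incr u t hu hut]
  have := gaussian_tail m (Real.toNNReal (t - u)) r hr
  rwa [Real.coe_toNNReal _ (sub_nonneg.2 hut)] at this

lemma W_tail {t : ℝ} (ht : 0 ≤ t) (m : ℕ) (r : ℝ) (hr : 0 < r) :
    μ {ω | r < |W t ω|}
      ≤ ENNReal.ofReal ((∫ x, x ^ (2*m) ∂(gaussianReal 0 1)) * t^m / r^(2*m)) := by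
  have := incr_tail hW le_rfl ht m r hr
  simpa [hW.start] using this


lemma indep_past_incr {t : ℝ} (u : ℕ → ℝ) (hu : Monotone u) (h0 : ∀ j, 0 ≤ u j)
    (hut : ∀ j, u j ≤ t) (i : ℕ) :
    IndepFun (fun ω => fun j : Fin (i+1) => W (u j) ω) (fun ω => W t ω - W (u i) ω) μ := by
  classical
  set τ' : ℕ → ℝ := fun l => if l = 0 then 0 else if l ≤ i+1 then u (l-1) else t with hτ'
  have hτ'mono : Monotone τ' := by
    apply monotone_nat_of_le_succ
    intro l
    rcases Nat.eq_zero_or_pos l with hl | hl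
    · subst hl
      simp only [hτ', if_pos rfl, if_neg (Nat.one_ne_zero)]
      rcases le_or_gt 1 (i+1) with h | h
      · rw [if_pos h]; exact h0 0
      · omega
    · have hl0 : l ≠ 0 := by omega
      have hl1 : l + 1 ≠ 0 := by omega
      simp only [hτ', if_neg hl0, if_neg hl1]
      rcases le_or_gt (l+1) (i+1) with h | h
      · rw [if_pos (by omega : l ≤ i+1), if_pos h]
        exact hu (by omega)
      · rw [if_neg (by omega : ¬ l + 1 ≤ i + 1)]
        rcases le_or_gt l (i+1) with h2 | h2
        · rw [if_pos h2]; exact hut _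
        · rw [if_neg (by omega)]
  have hτ'nonneg : ∀ l, 0 ≤ τ' l := fun l => le_trans (le_refl 0) (by
    have := hτ'mono (Nat.zero_le l)
    simpa [hτ', if_pos rfl] using this)
  have hind := hW.indep (i+2) (fun l : Fin (i+3) => τ' l.val)
    (fun a b hab => hτ'mono hab) (fun l => hτ'nonneg l.val)
  set X : Fin (i+2) → Ω → ℝ :=
    fun l ω => W (τ' (l.val+1)) ω - W (τ' l.val) ω with hX
  have hind' : iIndepFun X μ := by
    convert hind using 2 with l
    rfl
  have hmeasX : ∀ l, Measurable (X l) := fun l => (hW.meas _).sub (hW.meas _)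
  set S : Finset (Fin (i+2)) := Finset.univ.erase (Fin.last (i+1)) with hS
  set T : Finset (Fin (i+2)) := {Fin.last (i+1)} with hT
  have hST : Disjoint S T := by
    rw [Finset.disjoint_singleton_right]
    exact Finset.notMem_erase _ _
  have h1 := hind'.indepFun_finset S T hST hmeasX
  set F : (↥S → ℝ) → (Fin (i+1) → ℝ) := fun y j =>
    ∑ l ∈ Finset.range (j.val+1),
      (if h : l < i+1 then
        y ⟨⟨l, by omega⟩, by simp [hS, Finset.mem_erase, Fin.ext_iff]; omega⟩ else 0) with hF
  have hFmeas : Measurable F := by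
    apply measurable_pi_lambda
    intro j
    apply Finset.measurable_sum
    intro l _
    split_ifs with h
    · exact measurable_pi_apply _
    · exact measurable_const
  set G : (↥T → ℝ) → ℝ := fun y => y ⟨Fin.last (i+1), Finset.mem_singleton_self _⟩ with hG
  have hGmeas : Measurable G := measurable_pi_apply _
  have h2 := h1.comp hFmeas hGmeas
  have claim1 : (F ∘ fun ω (l : ↥S) => X l ω) = fun ω => fun j : Fin (i+1) => W (u j) ω := by
    funext ω j
    show ∑ l ∈ Finset.range (j.val+1), _ = _
    have hterm : ∀ l ∈ Finset.range (j.val+1),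
        (if h : l < i+1 then
          X ⟨l, by omega⟩ ω else 0) = W (τ' (l+1)) ω - W (τ' l) ω := by
      intro l hl
      rw [Finset.mem_range] at hl
      have hli : l < i+1 := by have := j.isLt; omega
      rw [dif_pos hli]
    rw [Finset.sum_congr rfl hterm, Finset.sum_range_sub (fun l => W (τ' l) ω)]
    have h0' : τ' 0 = 0 := by simp [hτ']
    have hj' : τ' (j.val+1) = u j.val := by
      have : (j.val + 1 : ℕ) ≠ 0 := by omega
      have h2' : j.val + 1 ≤ i + 1 := by have := j.isLt; omega
      simp [hτ', this, h2']
    rw [h0', hj', hW.start]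
    ring
  have claim2 : (G ∘ fun ω (l : ↥T) => X l ω) = fun ω => W t ω - W (u i) ω := by
    funext ω
    show X (Fin.last (i+1)) ω = _
    have h1' : τ' (i+2) = t := by simp [hτ']
    have h2' : τ' (i+1) = u i := by simp [hτ']
    show W (τ' ((Fin.last (i+1)).val + 1)) ω - W (τ' (Fin.last (i+1)).val) ω = _
    rw [Fin.val_last]
    rw [show i + 1 + 1 = i + 2 from rfl, h1', h2']
  rw [claim1, claim2] at h2
  exact h2

lemma maximal_ineq {t b : ℝ} (hb : 0 < b) (u : ℕ → ℝ) (hu : Monotone u) (h0 : ∀ j, 0 ≤ u j)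
    (hut : ∀ j, u j ≤ t)
    (hhalf : ∀ j, μ {ω | b/2 < |W t ω - W (u j) ω|} ≤ 2⁻¹) (N : ℕ)
    (hprob : IsProbabilityMeasure μ) :
    μ {ω | ∃ j < N, b < |W (u j) ω|} ≤ 2 * μ {ω | b/2 < |W t ω|} := by
  classical
  haveI := hprob
  set V : ∀ i : ℕ, Ω → (Fin (i+1) → ℝ) := fun i ω => fun j : Fin (i+1) => W (u j) ω with hV
  set D : ℕ → Ω → ℝ := fun i ω => W t ω - W (u i) ω with hD
  set SC : ∀ i : ℕ, Set (Fin (i+1) → ℝ) := fun i =>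
    {y | b < |y (Fin.last i)| ∧ ∀ j : Fin (i+1), j.val < i → |y j| ≤ b} with hSC
  set SB : Set ℝ := {x | |x| ≤ b/2} with hSB
  set C : ℕ → Set Ω := fun i => V i ⁻¹' SC i with hC
  set B : ℕ → Set Ω := fun i => D i ⁻¹' SB with hB
  have hSCmeas : ∀ i, MeasurableSet (SC i) := by
    intro i
    have : SC i = ((fun y : Fin (i+1) → ℝ => |y (Fin.last i)|) ⁻¹' Set.Ioi b) ∩
        ⋂ j : Fin (i+1), ⋂ (_ : j.val < i), ((fun y : Fin (i+1) → ℝ => |y j|) ⁻¹' Set.Iic b) := by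
      ext y
      simp [hSC, Set.mem_iInter]
    rw [this]
    exact (((measurable_pi_apply _).abs) measurableSet_Ioi).inter
      (MeasurableSet.iInter fun j => MeasurableSet.iInter fun _ =>
        ((measurable_pi_apply _).abs) measurableSet_Iic)
  have hSBmeas : MeasurableSet SB := (measurable_abs) measurableSet_Iic
  have hVmeas : ∀ i, Measurable (V i) :=
    fun i => measurable_pi_lambda _ fun j => hW.meas _
  have hDmeas : ∀ i, Measurable (D i) := fun i => (hW.meas _).sub (hW.meas _)
  have hCmeas : ∀ i, MeasurableSet (C i) := fun i => (hVmeas i) (hSCmeas i)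
  have hBmeas : ∀ i, MeasurableSet (B i) := fun i => (hDmeas i) hSBmeas
  have hCmem : ∀ i ω, ω ∈ C i ↔ (b < |W (u i) ω| ∧ ∀ j < i, |W (u j) ω| ≤ b) := by
    intro i ω
    constructor
    · rintro ⟨h1, h2⟩
      refine ⟨by simpa [hV] using h1, fun j hj => ?_⟩
      have := h2 ⟨j, by omega⟩ (by simpa using hj)
      simpa [hV] using this
    · rintro ⟨h1, h2⟩
      exact ⟨by simpa [hV] using h1, fun j hj => h2 j.val hj⟩
  have hindep : ∀ i, μ (C i ∩ B i) = μ (C i) * μ (B i) := fun i =>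
    (indep_past_incr hW u hu h0 hut i).measure_inter_preimage_eq_mul _ _ (hSCmeas i) hSBmeas
  have hBge : ∀ i, (2⁻¹ : ℝ≥0∞) ≤ μ (B i) := by
    intro i
    have hcompl : (B i)ᶜ = {ω | b/2 < |D i ω|} := by
      ext ω; simp [hB, hSB, not_le]
    have hle : μ (B i)ᶜ ≤ 2⁻¹ := by rw [hcompl]; exact hhalf i
    have hsum := measure_add_measure_compl (μ := μ) (hBmeas i)
    rw [measure_univ] at hsum
    have h1 : (1:ℝ≥0∞) ≤ μ (B i) + 2⁻¹ := by
      rw [← hsum]; exact add_le_add_right hle _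
    have := tsub_le_iff_right.2 h1
    simpa [ENNReal.one_sub_inv_two] using this
  have hsubset : ∀ i, C i ∩ B i ⊆ {ω | b/2 < |W t ω|} := by
    intro i ω hω
    obtain ⟨hωC, hωB⟩ := hω
    rw [hCmem] at hωC
    have h1 : |W (u i) ω| - |W t ω| ≤ |W t ω - W (u i) ω| := by
      rw [abs_sub_comm]; exact abs_sub_abs_le_abs_sub _ _
    have h2 : |W t ω - W (u i) ω| ≤ b/2 := hωB
    have h3 : b < |W (u i) ω| := hωC.1
    show b/2 < |W t ω|
    linarith
  have hdisj : ∀ i j, i < j → Disjoint (C i ∩ B i) (C j ∩ B j) := by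
    intro i j hij
    rw [Set.disjoint_left]
    rintro ω ⟨hωC, _⟩ ⟨hωC', _⟩
    rw [hCmem] at hωC hωC'
    exact absurd hωC.1 (not_lt.2 (hωC'.2 i hij))
  have hsub : {ω | ∃ j < N, b < |W (u j) ω|} ⊆ ⋃ i ∈ Finset.range N, C i := by
    rintro ω ⟨j, hjN, hj⟩
    have he : ∃ k, b < |W (u k) ω| := ⟨j, hj⟩
    set k := Nat.find he with hk
    have hkj : k ≤ j := Nat.find_min' he hj
    refine Set.mem_biUnion (show k ∈ Finset.range N from Finset.mem_range.2 (by omega)) ?_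
    rw [hCmem]
    exact ⟨Nat.find_spec he, fun j' hj' => not_lt.1 (Nat.find_min he hj')⟩
  calc μ {ω | ∃ j < N, b < |W (u j) ω|}
      ≤ μ (⋃ i ∈ Finset.range N, C i) := measure_mono hsub
    _ ≤ ∑ i ∈ Finset.range N, μ (C i) := measure_biUnion_finset_le _ _
    _ ≤ ∑ i ∈ Finset.range N, 2 * μ (C i ∩ B i) := by
        apply Finset.sum_le_sum
        intro i _
        calc μ (C i) = μ (C i) * 1 := (mul_one _).symm
          _ = μ (C i) * (2 * 2⁻¹) := by rw [ENNReal.mul_inv_cancel (by norm_num) (by norm_num)]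
          _ ≤ μ (C i) * (2 * μ (B i)) := by
              exact mul_le_mul_right (mul_le_mul_right (hBge i) 2) _
          _ = 2 * (μ (C i) * μ (B i)) := by ring
          _ = 2 * μ (C i ∩ B i) := by rw [hindep i]
    _ = 2 * ∑ i ∈ Finset.range N, μ (C i ∩ B i) := by rw [Finset.mul_sum]
    _ = 2 * μ (⋃ i ∈ Finset.range N, (C i ∩ B i)) := by
        rw [measure_biUnion_finset ?_ (fun i _ => ((hCmeas i).inter (hBmeas i)))]
        intro i _ j _ hij
        rcases lt_or_gt_of_ne hij with h | h
        · exact hdisj i j h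
        · exact (hdisj j i h).symm
    _ ≤ 2 * μ {ω | b/2 < |W t ω|} := by
        apply mul_le_mul_right
        apply measure_mono
        apply Set.iUnion₂_subset
        intro i _
        exact hsubset i

lemma bad_bound {T b : ℝ} (hT : 0 < T) (hb : 0 < b)
    (hhalf : ∀ v ∈ Set.Icc (0:ℝ) T, μ {ω | b/2 < |W T ω - W v ω|} ≤ 2⁻¹)
    (hprob : IsProbabilityMeasure μ) :
    MeasurableSet {ω | ∃ s ∈ Set.Icc (0:ℝ) T, b < |W s ω|} ∧
    μ {ω | ∃ s ∈ Set.Icc (0:ℝ) T, b < |W s ω|} ≤ 2 * μ {ω | b/2 < |W T ω|} := by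
  classical
  haveI := hprob
  set u : ℕ → ℕ → ℝ := fun n j => ((min j (2^n) : ℕ) : ℝ) * T / (2:ℝ)^n with hu
  have hu_mono : ∀ n, Monotone (u n) := by
    intro n j j' hj
    apply div_le_div_of_nonneg_right ?_ (by positivity)
    · apply mul_le_mul_of_nonneg_right _ hT.le
      exact_mod_cast Nat.cast_le.2 (min_le_min hj le_rfl)
  have hu_nonneg : ∀ n j, 0 ≤ u n j := by intro n j; positivity
  have hu_le : ∀ n j, u n j ≤ T := by
    intro n j
    rw [div_le_iff₀ (by positivity)]
    have h1 : ((min j (2^n) : ℕ) : ℝ) ≤ (2:ℝ)^n := by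
      have : ((min j (2^n) : ℕ) : ℝ) ≤ ((2^n : ℕ) : ℝ) := Nat.cast_le.2 (min_le_right _ _)
      simpa [Nat.cast_pow] using this
    calc ((min j (2^n) : ℕ) : ℝ) * T ≤ (2:ℝ)^n * T := by
          exact mul_le_mul_of_nonneg_right h1 hT.le
      _ = T * (2:ℝ)^n := mul_comm _ _
  set E : ℕ → Set Ω := fun n => {ω | ∃ j < 2^n + 1, b < |W (u n j) ω|} with hE
  have hEmeas : ∀ n, MeasurableSet (E n) := by
    intro n
    have : E n = ⋃ j : ℕ, ⋃ (_ : j < 2^n + 1), {ω | b < |W (u n j) ω|} := by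
      ext ω; simp [hE]
    rw [this]
    exact MeasurableSet.iUnion fun j => MeasurableSet.iUnion fun _ =>
      measurableSet_lt measurable_const (hW.meas _).abs
  have hgrid : ∀ n j, j ≤ 2^n → u n j = j * T / 2^n := by
    intro n j hj
    have hjr : (j:ℝ) ≤ (2:ℝ)^n := by exact_mod_cast hj
    simp [hu, min_eq_left hjr]
  have hEmono : Monotone E := by
    apply monotone_nat_of_le_succ
    intro n ω hω
    obtain ⟨j, hj, hb'⟩ := hω
    refine ⟨2*j, by omega, ?_⟩
    have : u (n+1) (2*j) = u n j := by
      rw [hgrid n j (by omega), hgrid (n+1) (2*j) (by omega)]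
      push_cast
      field_simp
      ring
    rwa [this]
  have hkey : {ω | ∃ s ∈ Set.Icc (0:ℝ) T, b < |W s ω|} = ⋃ n, E n := by
    ext ω
    simp only [Set.mem_iUnion, Set.mem_setOf_eq]
    constructor
    · rintro ⟨s, ⟨hs0, hsT⟩, hbs⟩
      set ε := |W s ω| - b with hε
      have hεpos : 0 < ε := by simp [hε]; linarith
      obtain ⟨δ, hδpos, hδ⟩ := Metric.continuous_iff.mp (hW.cont ω) s ε hεpos
      obtain ⟨n, hn⟩ := pow_unbounded_of_one_lt (T/δ) (by norm_num : (1:ℝ) < 2)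
      have hTn : T / 2^n < δ := by
        rw [div_lt_iff₀ (by positivity)]
        rw [div_lt_iff₀ hδpos] at hn
        linarith [hn]
      set j := ⌊s * 2^n / T⌋₊ with hj
      have hjle : j ≤ 2^n := by
        have h2n : (0:ℝ) < 2^n := by positivity
        have h1 : s * 2^n / T ≤ (2:ℝ)^n := by
          rw [div_le_iff₀ hT]
          calc s * 2^n ≤ T * 2^n := mul_le_mul_of_nonneg_right hsT h2n.le
            _ = 2^n * T := mul_comm _ _
        calc j ≤ ⌊((2^n : ℕ) : ℝ)⌋₊ := Nat.floor_mono (by push_cast; exact h1)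
          _ = 2^n := Nat.floor_natCast _
      have hunj : u n j = j * T / 2^n := hgrid n j hjle
      have hfl1 : (j : ℝ) ≤ s * 2^n / T := Nat.floor_le (by positivity)
      have hfl2 : s * 2^n / T < j + 1 := Nat.lt_floor_add_one _
      have hd1 : (j:ℝ) * T / 2^n ≤ s := by
        rw [div_le_iff₀ (by positivity : (0:ℝ) < 2^n)]
        rw [le_div_iff₀ hT] at hfl1
        linarith
      have hd2 : s - (j:ℝ) * T / 2^n < δ := by
        have : s < ((j:ℝ)+1) * T / 2^n := by
          rw [lt_div_iff₀ (by positivity : (0:ℝ) < 2^n)]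
          rw [div_lt_iff₀ hT] at hfl2
          linarith
        have hstep : ((j:ℝ)+1) * T / 2^n - (j:ℝ) * T / 2^n = T / 2^n := by ring
        linarith
      have hdist : dist (u n j) s < δ := by
        rw [hunj, Real.dist_eq, abs_lt]
        constructor <;> [linarith; linarith]
      have := hδ (u n j) hdist
      rw [Real.dist_eq] at this
      refine ⟨n, j, by omega, ?_⟩
      have habs : |W s ω| - |W (u n j) ω| ≤ |W (u n j) ω - W s ω| := by
        rw [abs_sub_comm]
        exact abs_sub_abs_le_abs_sub _ _
      simp only [hε] at this
      linarith
    · rintro ⟨n, j, hj, hb'⟩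
      exact ⟨u n j, ⟨hu_nonneg n j, hu_le n j⟩, hb'⟩
  constructor
  · rw [hkey]; exact MeasurableSet.iUnion hEmeas
  · rw [hkey, hEmono.measure_iUnion]
    apply iSup_le
    intro n
    exact maximal_ineq hW hb (u n) (hu_mono n) (hu_nonneg n)
      (hu_le n) (fun j => hhalf (u n j) ⟨hu_nonneg n j, hu_le n j⟩) (2^n+1) hprob

lemma integral_lower (σ₀ σt p₀ : ℝ) (hp₀ : 0 < p₀) {b : ℝ} (hbσ : |σt| * b ≤ |σ₀|/2)
    (hσ : 0 < |σ₀|) (ω : Ω) {τ Δ : ℝ} (hτ : 0 < τ) (hτΔ : τ ≤ Δ)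
    (hωb : ∀ s ∈ Set.Icc (0:ℝ) τ, |W s ω| ≤ b) :
    (|σ₀|/2) ^ p₀ * τ ≤ ∫ s in Set.Ioc (0:ℝ) Δ, |σ₀ + σt * W s ω| ^ p₀ := by
  set f : ℝ → ℝ := fun s => |σ₀ + σt * W s ω| ^ p₀ with hf
  have hcont : Continuous f :=
    Continuous.rpow_const ((continuous_const.add (continuous_const.mul (hW.cont ω))).abs)
      (fun x => Or.inr hp₀.le)
  have hintΔ : IntegrableOn f (Set.Ioc (0:ℝ) Δ) volume := hcont.integrableOn_Ioc
  have hintτ : IntegrableOn f (Set.Ioc (0:ℝ) τ) volume := hcont.integrableOn_Ioc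
  have hbound : ∀ s ∈ Set.Ioc (0:ℝ) τ, (|σ₀|/2) ^ p₀ ≤ f s := by
    intro s hs
    have hWs : |W s ω| ≤ b := hωb s ⟨hs.1.le, hs.2⟩
    have htri : |σ₀| - |σt * W s ω| ≤ |σ₀ + σt * W s ω| := by
      have h1 := abs_add_le (σ₀ + σt * W s ω) (-(σt * W s ω))
      simp only [add_neg_cancel_right, abs_neg] at h1
      linarith
    have h2 : |σt * W s ω| ≤ |σt| * b := by
      rw [abs_mul]
      exact mul_le_mul_of_nonneg_left hWs (abs_nonneg _)
    have h3 : |σ₀|/2 ≤ |σ₀ + σt * W s ω| := by linarith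
    exact Real.rpow_le_rpow (by positivity) h3 hp₀.le
  have hb0 : (0:ℝ) ≤ b := le_trans (abs_nonneg (W 0 ω)) (hωb 0 ⟨le_rfl, hτ.le⟩)
  calc (|σ₀|/2) ^ p₀ * τ
      = ∫ _ in Set.Ioc (0:ℝ) τ, ((|σ₀|/2) ^ p₀) := by
        rw [setIntegral_const, Real.volume_real_Ioc_of_le hτ.le, smul_eq_mul,
          sub_zero, mul_comm]
    _ ≤ ∫ s in Set.Ioc (0:ℝ) τ, f s := by
        apply setIntegral_mono_on (integrableOn_const (by simp))
          hintτ measurableSet_Ioc hbound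
    _ ≤ ∫ s in Set.Ioc (0:ℝ) Δ, f s := by
        apply setIntegral_mono_set hintΔ
          (Filter.Eventually.of_forall fun s => by positivity)
          ((Set.Ioc_subset_Ioc le_rfl hτΔ).eventuallyLE)

end BM


set_option maxHeartbeats 2000000 in
/-- Negative moments of the time-integral of `|σ₀ + σ̃₀ W_s|^{p₀}` over `[0, Δ]` are of
order `Δ^{-p₁}` for small `Δ`. -/
theorem negative_moment_integrated_vol (Ω : Type*) [MeasurableSpace Ω] (μ : Measure Ω)
    [IsProbabilityMeasure μ] (W : ℝ → Ω → ℝ) (hW : IsBrownianMotion μ W)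
    (σ₀ σt p₀ p₁ : ℝ) (hσ₀ : σ₀ ≠ 0) (hp₀ : 0 < p₀) (hp₁ : 0 < p₁) :
    ∃ K > 0, ∃ Δ₀ > 0, ∀ Δ : ℝ, 0 < Δ → Δ ≤ Δ₀ →
      ∫⁻ ω, ENNReal.ofReal
          ((∫ s in Set.Ioc (0 : ℝ) Δ, |σ₀ + σt * W s ω| ^ p₀) ^ (-p₁)) ∂μ
        ≤ ENNReal.ofReal (K * Δ ^ (-p₁)) := by
  classical
  have hσ : 0 < |σ₀| := abs_pos.2 hσ₀
  set b : ℝ := if σt = 0 then 1 else |σ₀| / (2 * |σt|) with hbdef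
  have hb : 0 < b := by
    rw [hbdef]; split_ifs with h
    · norm_num
    · have : 0 < |σt| := abs_pos.2 h
      positivity
  have hbσ : |σt| * b ≤ |σ₀| / 2 := by
    rw [hbdef]; split_ifs with h
    · simp [h]; positivity
    · have hσt : (0:ℝ) < |σt| := abs_pos.2 h
      rw [mul_div_assoc']
      rw [div_le_div_iff₀ (by positivity) (by norm_num)]
      ring_nf
      nlinarith
  set c : ℝ := (|σ₀|/2) ^ p₀ with hcdef
  have hc : 0 < c := Real.rpow_pos_of_pos (by positivity) _
  set A : ℝ := ∫ x, x ^ (2*1) ∂(gaussianReal 0 1) with hAdef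
  have hA0 : 0 ≤ A := integral_nonneg fun x => (even_two_mul 1).pow_nonneg x
  set m : ℕ := ⌈p₁⌉₊ + 1 with hmdef
  have hmp : p₁ < (m:ℝ) := by
    have h1 := Nat.le_ceil p₁
    have : ((⌈p₁⌉₊ : ℕ) : ℝ) < (m:ℝ) := by exact_mod_cast Nat.lt_succ_self _
    linarith
  set Cm : ℝ := ∫ x, x ^ (2*m) ∂(gaussianReal 0 1) with hCmdef
  have hCm0 : 0 ≤ Cm := integral_nonneg fun x => (even_two_mul m).pow_nonneg x
  set r : ℝ := (2:ℝ) ^ (p₁ - (m:ℝ)) with hrdef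
  have hr0 : 0 < r := Real.rpow_pos_of_pos (by norm_num) _
  have hr1 : r < 1 := Real.rpow_lt_one_of_one_lt_of_neg (by norm_num) (by linarith)
  set S : ℝ := (1 - r)⁻¹ with hSdef
  have hS0 : 0 ≤ S := by rw [hSdef]; exact inv_nonneg.2 (by linarith)
  set B₂ : ℝ := (2:ℝ)^p₁ * 2 * Cm / (b/2)^(2*m) with hB₂def
  have hB₂0 : 0 ≤ B₂ := by
    apply div_nonneg _ (by positivity)
    have : (0:ℝ) ≤ (2:ℝ)^p₁ := (Real.rpow_pos_of_pos (by norm_num) _).le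
    nlinarith
  set K : ℝ := c^(-p₁) * (1 + B₂ * S) with hKdef
  have hK : 0 < K := by
    have h1 : 0 < c^(-p₁) := Real.rpow_pos_of_pos hc _
    nlinarith [mul_nonneg hB₂0 hS0]
  set Δ₀ : ℝ := min 1 (b^2 / (8*A + 8)) with hΔ₀def
  have hΔ₀ : 0 < Δ₀ := lt_min (by norm_num) (div_pos (by positivity) (by linarith))
  refine ⟨K, hK, Δ₀, hΔ₀, ?_⟩
  intro Δ hΔ hΔΔ₀
  have hΔ1 : Δ ≤ 1 := le_trans hΔΔ₀ (min_le_left _ _)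
  have hΔb : Δ ≤ b^2 / (8*A + 8) := le_trans hΔΔ₀ (min_le_right _ _)
  set t : ℕ → ℝ := fun k => Δ / 2^k with htdef
  have htpos : ∀ k, 0 < t k := fun k => by rw [htdef]; positivity
  have htle : ∀ k, t k ≤ Δ := by
    intro k
    rw [htdef]
    exact div_le_self hΔ.le (one_le_pow₀ (by norm_num))
  -- half-probability bound for increments on any [0, t k]
  have hhalf : ∀ k, ∀ v ∈ Set.Icc (0:ℝ) (t k),
      μ {ω | b/2 < |W (t k) ω - W v ω|} ≤ 2⁻¹ := by
    intro k v hv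
    have h1 := incr_tail hW hv.1 hv.2 1 (b/2) (by positivity)
    rw [hAdef] at *
    refine le_trans h1 ?_
    have hreal : A * (t k - v)^1 / (b/2)^(2*1) ≤ 1/2 := by
      have htk : t k ≤ b^2/(8*A+8) := le_trans (htle k) hΔb
      have htk2 : (t k) * (8*A+8) ≤ b^2 := by
        rw [le_div_iff₀ (by positivity)] at htk
        linarith
      have hv2 : 0 ≤ v := hv.1
      have hv3 : v ≤ t k := hv.2
      rw [div_le_iff₀ (by positivity)]
      have e1 : (1:ℝ)/2 * (b/2)^(2*1) = b^2/8 := by ring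
      rw [e1]
      have h2 : A * (t k - v)^1 ≤ A * t k := by
        have : (t k - v)^1 = t k - v := pow_one _
        rw [this]
        nlinarith
      nlinarith [mul_nonneg hA0 (htpos k).le, mul_nonneg hA0 hv2]
    calc ENNReal.ofReal (A * (t k - v)^1 / (b/2)^(2*1)) ≤ ENNReal.ofReal (1/2) :=
          ENNReal.ofReal_le_ofReal hreal
      _ = 2⁻¹ := by
          rw [show (1:ℝ)/2 = (2:ℝ)⁻¹ by norm_num, ENNReal.ofReal_inv_of_pos (by norm_num)]
          norm_num
  -- bad sets
  set Bad : ℕ → Set Ω := fun k => {ω | ∃ s ∈ Set.Icc (0:ℝ) (t k), b < |W s ω|} with hBaddef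
  have hBB : ∀ k, MeasurableSet (Bad k) ∧
      μ (Bad k) ≤ 2 * μ {ω | b/2 < |W (t k) ω|} :=
    fun k => bad_bound hW (htpos k) hb (hhalf k) inferInstance
  have htail : ∀ k, μ {ω | b/2 < |W (t k) ω|}
      ≤ ENNReal.ofReal (Cm * (t k)^m / (b/2)^(2*m)) :=
    fun k => W_tail hW (htpos k).le m (b/2) (by positivity)
  have hBadle : ∀ k, μ (Bad k) ≤ ENNReal.ofReal (2 * (Cm * (t k)^m / (b/2)^(2*m))) := by
    intro k
    calc μ (Bad k) ≤ 2 * μ {ω | b/2 < |W (t k) ω|} := (hBB k).2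
      _ ≤ 2 * ENNReal.ofReal (Cm * (t k)^m / (b/2)^(2*m)) := mul_le_mul_right (htail k) _
      _ = ENNReal.ofReal (2 * (Cm * (t k)^m / (b/2)^(2*m))) := by
          rw [ENNReal.ofReal_mul (by norm_num : (0:ℝ) ≤ 2), ENNReal.ofReal_ofNat]
  set G : ℕ → Set Ω := fun k => (Bad k)ᶜ with hGdef
  have hGmeas : ∀ k, MeasurableSet (G k) := fun k => (hBB k).1.compl
  set D : ℕ → Set Ω := fun k => if k = 0 then G 0 else G k \ G (k-1) with hDdef
  have hDmeas : ∀ k, MeasurableSet (D k) := by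
    intro k
    show MeasurableSet (if k = 0 then G 0 else G k \ G (k-1))
    split_ifs
    · exact hGmeas 0
    · exact (hGmeas k).diff (hGmeas (k-1))
  have hcover : ∀ ω, ∃ k, ω ∈ G k := by
    intro ω
    obtain ⟨δ, hδpos, hδ⟩ := Metric.continuous_iff.mp (hW.cont ω) 0 b hb
    obtain ⟨k, hk⟩ := pow_unbounded_of_one_lt (Δ/δ) (by norm_num : (1:ℝ) < 2)
    refine ⟨k, ?_⟩
    intro hbad
    obtain ⟨s, ⟨hs0, hsk⟩, hbs⟩ := hbad
    have hskδ : dist s 0 < δ := by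
      rw [Real.dist_eq, sub_zero, abs_of_nonneg hs0]
      have : t k < δ := by
        rw [htdef, div_lt_iff₀ (by positivity)]
        rw [div_lt_iff₀ hδpos] at hk
        linarith
      linarith
    have := hδ s hskδ
    rw [Real.dist_eq, hW.start, sub_zero] at this
    linarith
  set κ : ℕ → ℝ≥0∞ := fun k => ENNReal.ofReal ((c * t k)^(-p₁)) with hκdef
  set X : Ω → ℝ≥0∞ := fun ω => ENNReal.ofReal
    ((∫ s in Set.Ioc (0 : ℝ) Δ, |σ₀ + σt * W s ω| ^ p₀) ^ (-p₁)) with hXdef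
  have hGlow : ∀ k ω, ω ∈ G k → X ω ≤ κ k := by
    intro k ω hωG
    have hωb : ∀ s ∈ Set.Icc (0:ℝ) (t k), |W s ω| ≤ b := by
      intro s hs
      by_contra hcon
      exact hωG ⟨s, hs, not_le.1 hcon⟩
    have hlow := integral_lower hW σ₀ σt p₀ hp₀ hbσ hσ ω (htpos k) (htle k) hωb
    rw [← hcdef] at hlow
    apply ENNReal.ofReal_le_ofReal
    exact Real.rpow_le_rpow_of_nonpos (by positivity) hlow (neg_nonpos.2 hp₁.le)
  have hpt : ∀ ω, X ω ≤ ∑' k, Set.indicator (D k) (fun _ => κ k) ω := by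
    intro ω
    set k₀ := Nat.find (hcover ω) with hk₀
    have hωD : ω ∈ D k₀ := by
      show ω ∈ (if k₀ = 0 then G 0 else G k₀ \ G (k₀-1))
      split_ifs with h
      · rw [← h]; exact Nat.find_spec (hcover ω)
      · exact ⟨Nat.find_spec (hcover ω), Nat.find_min (hcover ω) (by omega)⟩
    calc X ω ≤ κ k₀ := hGlow k₀ ω (Nat.find_spec (hcover ω))
      _ = Set.indicator (D k₀) (fun _ => κ k₀) ω := by rw [Set.indicator_of_mem hωD]
      _ ≤ ∑' k, Set.indicator (D k) (fun _ => κ k) ω := ENNReal.le_tsum k₀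
  have hlint : ∫⁻ ω, X ω ∂μ ≤ ∑' k, κ k * μ (D k) := by
    calc ∫⁻ ω, X ω ∂μ ≤ ∫⁻ ω, ∑' k, Set.indicator (D k) (fun _ => κ k) ω ∂μ :=
          lintegral_mono hpt
      _ = ∑' k, ∫⁻ ω, Set.indicator (D k) (fun _ => κ k) ω ∂μ :=
          lintegral_tsum fun k => (measurable_const.indicator (hDmeas k)).aemeasurable
      _ = ∑' k, κ k * μ (D k) := by
          congr 1
          funext k
          rw [lintegral_indicator_const (hDmeas k)]
  -- term bounds
  have hterm : ∀ k, κ (k+1) * μ (D (k+1)) ≤ ENNReal.ofReal ((c*Δ)^(-p₁) * B₂ * r^k) := by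
    intro k
    have hDsub : D (k+1) ⊆ Bad k := by
      have hD1 : D (k+1) = G (k+1) \ G k := by
        show (if k+1 = 0 then G 0 else G (k+1) \ G (k+1-1)) = G (k+1) \ G k
        rw [if_neg (Nat.succ_ne_zero k), Nat.add_sub_cancel]
      rw [hD1]
      rintro ω ⟨_, hω2⟩
      simpa [hGdef] using hω2
    have h1 : μ (D (k+1)) ≤ ENNReal.ofReal (2 * (Cm * (t k)^m / (b/2)^(2*m))) :=
      le_trans (measure_mono hDsub) (hBadle k)
    calc κ (k+1) * μ (D (k+1))
        ≤ κ (k+1) * ENNReal.ofReal (2 * (Cm * (t k)^m / (b/2)^(2*m))) :=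
          mul_le_mul_right h1 _
      _ = ENNReal.ofReal ((c * t (k+1))^(-p₁) * (2 * (Cm * (t k)^m / (b/2)^(2*m)))) := by
          rw [hκdef, ← ENNReal.ofReal_mul (Real.rpow_nonneg (by positivity) _)]
      _ ≤ ENNReal.ofReal ((c*Δ)^(-p₁) * B₂ * r^k) := by
          apply ENNReal.ofReal_le_ofReal
          have h2k : (0:ℝ) < (2:ℝ)^k := by positivity
          have h2k1 : (0:ℝ) < (2:ℝ)^(k+1) := by positivity
          have stepA : (c * t (k+1))^(-p₁) = (c*Δ)^(-p₁) * ((2:ℝ)^(k+1))^p₁ := by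
            have e1 : c * t (k+1) = (c*Δ) * ((2:ℝ)^(k+1))⁻¹ := by
              show c * (Δ / 2^(k+1)) = (c*Δ) * ((2:ℝ)^(k+1))⁻¹
              ring
            rw [e1, Real.mul_rpow (by positivity) (by positivity),
              Real.inv_rpow h2k1.le, Real.rpow_neg h2k1.le, inv_inv]
          have stepB : ((2:ℝ)^(k+1))^p₁ = ((2:ℝ)^k)^p₁ * (2:ℝ)^p₁ := by
            rw [pow_succ, Real.mul_rpow h2k.le (by norm_num)]
          have stepC : (t k)^m ≤ (((2:ℝ)^k)⁻¹)^m := by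
            apply pow_le_pow_left₀ (htpos k).le
            show Δ / 2^k ≤ ((2:ℝ)^k)⁻¹
            rw [inv_eq_one_div]
            exact div_le_div_of_nonneg_right hΔ1 h2k.le
          have hkey : ((2:ℝ)^k)^p₁ * (t k)^m ≤ r^k := by
            have e2 : (((2:ℝ)^k)⁻¹)^m = ((2:ℝ)^k)^(-(m:ℝ)) := by
              rw [Real.rpow_neg h2k.le, Real.rpow_natCast, inv_pow]
            have e3 : ((2:ℝ)^k)^p₁ * ((2:ℝ)^k)^(-(m:ℝ)) = ((2:ℝ)^k)^(p₁ - (m:ℝ)) := by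
              rw [← Real.rpow_add h2k]
              ring_nf
            have e4 : ((2:ℝ)^k)^(p₁ - (m:ℝ)) = r^k := by
              rw [← Real.rpow_natCast (2:ℝ) k, ← Real.rpow_mul (by norm_num : (0:ℝ) ≤ 2),
                mul_comm, Real.rpow_mul (by norm_num : (0:ℝ) ≤ 2), hrdef,
                Real.rpow_natCast]
            calc ((2:ℝ)^k)^p₁ * (t k)^m ≤ ((2:ℝ)^k)^p₁ * (((2:ℝ)^k)⁻¹)^m := by
                  apply mul_le_mul_of_nonneg_left stepC (Real.rpow_nonneg h2k.le _)
              _ = r^k := by rw [e2, e3, e4]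
          have hQ : (0:ℝ) ≤ (c*Δ)^(-p₁) * (2:ℝ)^p₁ * 2 * Cm / (b/2)^(2*m) := by
            apply div_nonneg _ (by positivity)
            have h5 : (0:ℝ) ≤ (c*Δ)^(-p₁) := Real.rpow_nonneg (by positivity) _
            have h6 : (0:ℝ) ≤ (2:ℝ)^p₁ := Real.rpow_nonneg (by norm_num) _
            exact mul_nonneg (mul_nonneg (mul_nonneg h5 h6) (by norm_num)) hCm0
          calc (c * t (k+1))^(-p₁) * (2 * (Cm * (t k)^m / (b/2)^(2*m)))
              = ((c*Δ)^(-p₁) * (2:ℝ)^p₁ * 2 * Cm / (b/2)^(2*m))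
                  * (((2:ℝ)^k)^p₁ * (t k)^m) := by
                rw [stepA, stepB]; ring
            _ ≤ ((c*Δ)^(-p₁) * (2:ℝ)^p₁ * 2 * Cm / (b/2)^(2*m)) * r^k :=
                mul_le_mul_of_nonneg_left hkey hQ
            _ = (c*Δ)^(-p₁) * B₂ * r^k := by rw [hB₂def]; ring
  -- sum up
  have hcΔnn : (0:ℝ) ≤ (c*Δ)^(-p₁) := Real.rpow_nonneg (by positivity) _
  have hsum : ∑' k, κ k * μ (D k)
      ≤ ENNReal.ofReal ((c*Δ)^(-p₁)) + ENNReal.ofReal ((c*Δ)^(-p₁) * B₂ * S) := by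
    rw [tsum_eq_zero_add' ENNReal.summable]
    apply add_le_add
    · calc κ 0 * μ (D 0) ≤ κ 0 * 1 := mul_le_mul_right prob_le_one _
        _ = κ 0 := mul_one _
        _ = ENNReal.ofReal ((c*Δ)^(-p₁)) := by
            have ht0 : t 0 = Δ := by show Δ / 2^0 = Δ; simp
            show ENNReal.ofReal ((c * t 0)^(-p₁)) = _
            rw [ht0]
    · calc ∑' k, κ (k+1) * μ (D (k+1))
          ≤ ∑' k, ENNReal.ofReal ((c*Δ)^(-p₁) * B₂ * r^k) := ENNReal.tsum_le_tsum hterm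
        _ = ∑' k : ℕ, ENNReal.ofReal ((c*Δ)^(-p₁) * B₂) * (ENNReal.ofReal r)^k := by
            congr 1
            funext k
            rw [ENNReal.ofReal_mul (mul_nonneg hcΔnn hB₂0), ENNReal.ofReal_pow hr0.le]
        _ = ENNReal.ofReal ((c*Δ)^(-p₁) * B₂) * (1 - ENNReal.ofReal r)⁻¹ := by
            rw [ENNReal.tsum_mul_left, ENNReal.tsum_geometric]
        _ = ENNReal.ofReal ((c*Δ)^(-p₁) * B₂) * ENNReal.ofReal S := by
            congr 1
            rw [hSdef, ENNReal.ofReal_inv_of_pos (by linarith),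
              ENNReal.ofReal_sub 1 hr0.le, ENNReal.ofReal_one]
        _ = ENNReal.ofReal ((c*Δ)^(-p₁) * B₂ * S) := by
            rw [← ENNReal.ofReal_mul (mul_nonneg hcΔnn hB₂0)]
  refine le_trans hlint (le_trans hsum ?_)
  rw [← ENNReal.ofReal_add hcΔnn (by nlinarith [mul_nonneg hB₂0 hS0])]
  apply ENNReal.ofReal_le_ofReal
  have hcΔ : (c*Δ)^(-p₁) = c^(-p₁) * Δ^(-p₁) := Real.mul_rpow hc.le hΔ.le
  rw [hKdef, hcΔ]
  apply le_of_eq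
  ring
end
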